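/- Bias correction term for the treatment moment (Lemma 'Bias Correction Terms', second component): E[(1/T)·Σ_{t=1}^{T} D̃_t·ε̃_t] = −ρ₂·(σ_ε²/T²)·Σ_{l=0}^{T-2} Σ_{j=0}^{l} φ^j; that is, it equals ρ₂ times the bias correction term E[(1/T)·Σ_{t=1}^{T} Ỹ_{t-1}·ε̃_t] for the lagged-outcome moment. -/

import Mathlib

open Finset MeasureTheory ProbabilityTheory

lemma my_integrable_mul {Ω : Type*} [MeasurableSpace Ω] {μ : Measure Ω} {f g : Ω → ℝ}
    (hf : MemLp f 2 μ) (hg : MemLp g 2 μ) : Integrable (fun ω => f ω * g ω) μ := by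
  have h := hg.smul (φ := f) (q := 2) (p := 2) (r := 1) hf
  rw [memLp_one_iff_integrable] at h
  exact h

lemma tilde_sum_eq {T : ℕ} (hT : (T:ℝ) ≠ 0) {S : Finset ℕ} (hS : S.card = T) (F G : ℕ → ℝ) :
    ∑ t ∈ S, (F t - (1/(T:ℝ)) * ∑ s ∈ S, F s) * (G t - (1/(T:ℝ)) * ∑ s ∈ S, G s)
      = ∑ t ∈ S, F t * G t - (1/(T:ℝ)) * ∑ s ∈ S, ∑ r ∈ S, F s * G r := by
  have h1 : ∑ s ∈ S, ∑ r ∈ S, F s * G r = (∑ s ∈ S, F s) * (∑ r ∈ S, G r) :=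
    (Finset.sum_mul_sum _ _ _ _).symm
  set A := ∑ s ∈ S, F s with hA
  set B := ∑ s ∈ S, G s with hB
  have expand : ∀ t ∈ S, (F t - 1/(T:ℝ)*A)*(G t - 1/(T:ℝ)*B)
      = F t * G t - (1/(T:ℝ)*A) * G t - (1/(T:ℝ)*B) * F t + (1/(T:ℝ)*A)*(1/(T:ℝ)*B) := by
    intros; ring
  rw [Finset.sum_congr rfl expand, h1]
  rw [Finset.sum_add_distrib, Finset.sum_sub_distrib, Finset.sum_sub_distrib,
    ← Finset.mul_sum, ← Finset.mul_sum, Finset.sum_const, hS, ← hA, ← hB]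
  simp only [nsmul_eq_mul]
  field_simp
  ring

lemma icc_pow_sum (φ σ : ℝ) (m : ℕ) : ∑ r ∈ Icc 1 m, φ^(m-r) * σ = σ * ∑ j ∈ range m, φ^j := by
  rw [← Finset.Ico_add_one_right_eq_Icc, Finset.sum_Ico_eq_sum_range]
  rw [Finset.mul_sum, ← Finset.sum_range_reflect]
  apply Finset.sum_congr rfl
  intro j hj
  simp only [Finset.mem_range] at hj
  have h : m - (1 + (m + 1 - 1 - 1 - j)) = j := by omega
  rw [h]
  ring

lemma icc_shift_sum {M : Type*} [AddCommMonoid M] (T : ℕ) (G : ℕ → M) :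
    ∑ s ∈ Icc 1 T, G (s-1) = ∑ i ∈ range T, G i := by
  rw [← Finset.Ico_add_one_right_eq_Icc, Finset.sum_Ico_eq_sum_range]
  apply Finset.sum_congr rfl
  intro i _
  congr 1
  omega

/-- Bias correction term for the treatment moment (second component of the Lemma
"Bias Correction Terms"):
`E[(1/T)·Σ_{t=1}^{T} D̃_t·ε̃_t] = −ρ₂·(σ_ε²/T²)·Σ_{l=0}^{T-2} Σ_{j=0}^{l} φ^j`; equivalently, it
equals `ρ₂` times the bias correction term for the lagged-outcome moment. -/
theorem bias_correction_term_tau {Ω : Type*} [MeasurableSpace Ω]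
    (μ : Measure Ω) [IsProbabilityMeasure μ] (T : ℕ) (hT : 2 ≤ T)
    (ρ₁ τ ρ₂ φ a c Y₀ σε2 σu2 : ℝ) (hφ : φ = ρ₁ + τ * ρ₂)
    (ε u : ℕ → Ω → ℝ)
    (hεmeas : ∀ t, Measurable (ε t)) (humeas : ∀ t, Measurable (u t))
    (hεL2 : ∀ t : ℕ, 1 ≤ t → t ≤ T → MemLp (ε t) 2 μ)
    (huL2 : ∀ t : ℕ, 1 ≤ t → t ≤ T → MemLp (u t) 2 μ)
    (hindep : iIndepFun (m := fun _ : Fin T ⊕ Fin T => (inferInstance : MeasurableSpace ℝ))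
      (Sum.elim (fun t : Fin T => ε (t + 1)) (fun t : Fin T => u (t + 1))) μ)
    (hεmean : ∀ t : ℕ, 1 ≤ t → t ≤ T → ∫ ω, ε t ω ∂μ = 0)
    (humean : ∀ t : ℕ, 1 ≤ t → t ≤ T → ∫ ω, u t ω ∂μ = 0)
    (hεvar : ∀ t : ℕ, 1 ≤ t → t ≤ T → ∫ ω, (ε t ω) ^ 2 ∂μ = σε2)
    (huvar : ∀ t : ℕ, 1 ≤ t → t ≤ T → ∫ ω, (u t ω) ^ 2 ∂μ = σu2)
    (Y D : ℕ → Ω → ℝ) (hY0 : ∀ ω, Y 0 ω = Y₀)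
    (hD : ∀ t : ℕ, 1 ≤ t → t ≤ T → ∀ ω, D t ω = c + ρ₂ * Y (t - 1) ω + u t ω)
    (hY : ∀ t : ℕ, 1 ≤ t → t ≤ T → ∀ ω,
      Y t ω = a + ρ₁ * Y (t - 1) ω + τ * D t ω + ε t ω):
    ∫ ω, (1 / (T : ℝ)) * ∑ t ∈ Icc 1 T,
        (D t ω - (1 / (T : ℝ)) * ∑ s ∈ Icc 1 T, D s ω)
          * (ε t ω - (1 / (T : ℝ)) * ∑ s ∈ Icc 1 T, ε s ω) ∂μ
      = -ρ₂ * (σε2 / (T : ℝ) ^ 2) * ∑ l ∈ range (T - 1), ∑ j ∈ range (l + 1), φ ^ j ∧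
    ∫ ω, (1 / (T : ℝ)) * ∑ t ∈ Icc 1 T,
        (D t ω - (1 / (T : ℝ)) * ∑ s ∈ Icc 1 T, D s ω)
          * (ε t ω - (1 / (T : ℝ)) * ∑ s ∈ Icc 1 T, ε s ω) ∂μ
      = ρ₂ * ∫ ω, (1 / (T : ℝ)) * ∑ t ∈ Icc 1 T,
          (Y (t - 1) ω - (1 / (T : ℝ)) * ∑ s ∈ Icc 1 T, Y (s - 1) ω)
            * (ε t ω - (1 / (T : ℝ)) * ∑ s ∈ Icc 1 T, ε s ω) ∂μ := by
  have hT0 : (T : ℝ) ≠ 0 := Nat.cast_ne_zero.mpr (by omega)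
  have hcard : (Icc 1 T).card = T := by simp
  -- step recursion
  have hrec : ∀ k, k + 1 ≤ T → ∀ ω,
      Y (k+1) ω = (a + τ*c) + φ * Y k ω + (ε (k+1) ω + τ * u (k+1) ω) := by
    intro k hk ω
    have h1 := hY (k+1) (by omega) hk ω
    have h2 := hD (k+1) (by omega) hk ω
    simp only [Nat.add_sub_cancel] at h1 h2
    rw [h1, h2, hφ]; ring
  -- explicit representation of Y
  have hYrep : ∀ k, k ≤ T → ∀ ω,
      Y k ω = (φ^k * Y₀ + (a + τ*c) * ∑ j ∈ range k, φ^j)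
        + ∑ s ∈ Icc 1 k, φ^(k-s) * (ε s ω + τ * u s ω) := by
    intro k
    induction k with
    | zero => intro _ ω; simp [hY0 ω]
    | succ k ih =>
      intro hk ω
      have hterm : ∀ s ∈ Icc 1 k, φ^(k+1-s) * (ε s ω + τ * u s ω)
          = φ * (φ^(k-s) * (ε s ω + τ * u s ω)) := by
        intro s hs
        simp only [Finset.mem_Icc] at hs
        rw [show k+1-s = (k-s)+1 by omega]; ring
      have e1 : ∑ s ∈ Icc 1 (k+1), φ^(k+1-s) * (ε s ω + τ * u s ω)
          = φ * (∑ s ∈ Icc 1 k, φ^(k-s) * (ε s ω + τ * u s ω))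
            + (ε (k+1) ω + τ * u (k+1) ω) := by
        rw [Finset.sum_Icc_succ_top (by omega : 1 ≤ k+1), Finset.sum_congr rfl hterm,
          ← Finset.mul_sum, Nat.sub_self, pow_zero, one_mul]
      have e2 : ∑ j ∈ range (k+1), φ^j = φ * ∑ j ∈ range k, φ^j + 1 := by
        rw [Finset.sum_range_succ']
        simp only [pow_succ, pow_zero]
        rw [← Finset.sum_mul, Finset.mul_sum, Finset.sum_mul]
        congr 1
        exact Finset.sum_congr rfl (fun i _ => by ring)
      rw [hrec k hk ω, ih (by omega) ω, e1, e2, pow_succ]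
      ring
  -- L² membership of Y
  have hYL2 : ∀ k, k ≤ T → MemLp (Y k) 2 μ := by
    intro k hk
    rw [show Y k = fun ω => (φ^k * Y₀ + (a + τ*c) * ∑ j ∈ range k, φ^j)
        + ∑ s ∈ Icc 1 k, φ^(k-s) * (ε s ω + τ * u s ω) from funext (hYrep k hk)]
    refine MemLp.add (f := fun _ => (φ^k * Y₀ + (a + τ*c) * ∑ j ∈ range k, φ^j))
      (g := fun ω => ∑ s ∈ Icc 1 k, φ^(k-s) * (ε s ω + τ * u s ω)) (memLp_const _) ?_
    apply memLp_finset_sum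
    intro s hs
    simp only [Finset.mem_Icc] at hs
    exact (((hεL2 s hs.1 (le_trans hs.2 hk)).add
      ((huL2 s hs.1 (le_trans hs.2 hk)).const_mul τ)).const_mul _)
  have hDL2 : ∀ t, 1 ≤ t → t ≤ T → MemLp (D t) 2 μ := by
    intro t h1 h2
    rw [show D t = fun ω => c + ρ₂ * Y (t-1) ω + u t ω from funext (hD t h1 h2)]
    exact ((memLp_const c).add ((hYL2 (t-1) (by omega)).const_mul ρ₂)).add (huL2 t h1 h2)
  -- independence facts
  have hiεε : ∀ s t, 1 ≤ s → s ≤ T → 1 ≤ t → t ≤ T → s ≠ t → IndepFun (ε s) (ε t) μ := by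
    intro s t hs1 hs2 ht1 ht2 hst
    have h := hindep.indepFun (i := Sum.inl ⟨s-1, by omega⟩) (j := Sum.inl ⟨t-1, by omega⟩)
      (by simp [Fin.ext_iff]; omega)
    simpa [show s-1+1 = s by omega, show t-1+1 = t by omega] using h
  have hiuε : ∀ s t, 1 ≤ s → s ≤ T → 1 ≤ t → t ≤ T → IndepFun (u s) (ε t) μ := by
    intro s t hs1 hs2 ht1 ht2
    have h := hindep.indepFun (i := Sum.inr ⟨s-1, by omega⟩) (j := Sum.inl ⟨t-1, by omega⟩)
      (by simp)
    simpa [show s-1+1 = s by omega, show t-1+1 = t by omega] using h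
  -- integrals of products of innovations
  have hEεε : ∀ s t, 1 ≤ s → s ≤ T → 1 ≤ t → t ≤ T →
      ∫ ω, ε s ω * ε t ω ∂μ = if s = t then σε2 else 0 := by
    intro s t hs1 hs2 ht1 ht2
    by_cases h : s = t
    · subst h
      simp only [if_pos rfl]
      rw [← hεvar s hs1 hs2]
      congr 1; funext ω; ring
    · rw [if_neg h]
      have := (hiεε s t hs1 hs2 ht1 ht2 h).integral_mul_eq_mul_integral
        (hεmeas s).aestronglyMeasurable (hεmeas t).aestronglyMeasurable
      simp only [Pi.mul_apply] at this
      rw [this, hεmean s hs1 hs2, zero_mul]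
  have hEuε : ∀ s t, 1 ≤ s → s ≤ T → 1 ≤ t → t ≤ T →
      ∫ ω, u s ω * ε t ω ∂μ = 0 := by
    intro s t hs1 hs2 ht1 ht2
    have hm := (hiuε s t hs1 hs2 ht1 ht2).integral_mul_eq_mul_integral
      (humeas s).aestronglyMeasurable (hεmeas t).aestronglyMeasurable
    simp only [Pi.mul_apply] at hm
    rw [hm,
      humean s hs1 hs2, zero_mul]
  -- key moment: E[Y k ε t]
  have hEYε : ∀ k, k ≤ T → ∀ t, 1 ≤ t → t ≤ T →
      ∫ ω, Y k ω * ε t ω ∂μ = if t ≤ k then φ^(k-t) * σε2 else 0 := by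
    intro k hk t ht1 ht2
    have hrw : ∀ ω, Y k ω * ε t ω
        = (φ^k * Y₀ + (a + τ*c) * ∑ j ∈ range k, φ^j) * ε t ω
          + ∑ s ∈ Icc 1 k, (φ^(k-s) * (ε s ω * ε t ω) + (φ^(k-s) * τ) * (u s ω * ε t ω)) := by
      intro ω
      rw [hYrep k hk ω, add_mul, Finset.sum_mul]
      congr 1
      exact Finset.sum_congr rfl (fun s _ => by ring)
    rw [integral_congr_ae (Filter.Eventually.of_forall hrw)]
    have hmem : ∀ s, s ∈ Icc 1 k → 1 ≤ s ∧ s ≤ T := by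
      intro s hs; simp only [Finset.mem_Icc] at hs; exact ⟨hs.1, le_trans hs.2 hk⟩
    have hint1 : ∀ s ∈ Icc 1 k, Integrable (fun ω => φ^(k-s) * (ε s ω * ε t ω)
        + (φ^(k-s) * τ) * (u s ω * ε t ω)) μ := by
      intro s hs
      obtain ⟨h1, h2⟩ := hmem s hs
      exact ((my_integrable_mul (hεL2 s h1 h2) (hεL2 t ht1 ht2)).const_mul _).add
        ((my_integrable_mul (huL2 s h1 h2) (hεL2 t ht1 ht2)).const_mul _)
    rw [integral_add (((hεL2 t ht1 ht2).integrable (by norm_num)).const_mul _)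
      (integrable_finset_sum _ hint1), integral_finset_sum _ hint1,
      integral_const_mul, hεmean t ht1 ht2, mul_zero, zero_add]
    have hterm : ∀ s ∈ Icc 1 k,
        ∫ ω, (φ^(k-s) * (ε s ω * ε t ω) + (φ^(k-s) * τ) * (u s ω * ε t ω)) ∂μ
        = if s = t then φ^(k-s) * σε2 else 0 := by
      intro s hs
      obtain ⟨h1, h2⟩ := hmem s hs
      rw [integral_add ((my_integrable_mul (hεL2 s h1 h2) (hεL2 t ht1 ht2)).const_mul _)
        ((my_integrable_mul (huL2 s h1 h2) (hεL2 t ht1 ht2)).const_mul _),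
        integral_const_mul, integral_const_mul, hEεε s t h1 h2 ht1 ht2,
        hEuε s t h1 h2 ht1 ht2, mul_zero, add_zero]
      by_cases h : s = t <;> simp [h]
    rw [Finset.sum_congr rfl hterm, Finset.sum_ite_eq' (Icc 1 k) t (fun s => φ^(k-s) * σε2)]
    simp only [Finset.mem_Icc]
    by_cases h : t ≤ k <;> simp [h, ht1]
  -- E[D s ε t]
  have hEDε : ∀ s, 1 ≤ s → s ≤ T → ∀ t, 1 ≤ t → t ≤ T →
      ∫ ω, D s ω * ε t ω ∂μ = ρ₂ * (if t ≤ s-1 then φ^(s-1-t) * σε2 else 0) := by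
    intro s hs1 hs2 t ht1 ht2
    have hrw : ∀ ω, D s ω * ε t ω
        = c * ε t ω + ρ₂ * (Y (s-1) ω * ε t ω) + u s ω * ε t ω := by
      intro ω; rw [hD s hs1 hs2 ω]; ring
    rw [integral_congr_ae (Filter.Eventually.of_forall hrw)]
    have hi1 : Integrable (fun ω => c * ε t ω) μ :=
      ((hεL2 t ht1 ht2).integrable (by norm_num)).const_mul _
    have hi2 : Integrable (fun ω => ρ₂ * (Y (s-1) ω * ε t ω)) μ :=
      (my_integrable_mul (hYL2 (s-1) (by omega)) (hεL2 t ht1 ht2)).const_mul _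
    have hi3 : Integrable (fun ω => u s ω * ε t ω) μ :=
      my_integrable_mul (huL2 s hs1 hs2) (hεL2 t ht1 ht2)
    have hi12 : Integrable (fun ω => c * ε t ω + ρ₂ * (Y (s-1) ω * ε t ω)) μ := hi1.add hi2
    rw [integral_add hi12 hi3, integral_add hi1 hi2, integral_const_mul,
      integral_const_mul, hεmean t ht1 ht2, hEuε s t hs1 hs2 ht1 ht2,
      hEYε (s-1) (by omega) t ht1 ht2, mul_zero, zero_add, add_zero]
  -- generic reduction for the big integral
  have main : ∀ (f : ℕ → Ω → ℝ), (∀ t, 1 ≤ t → t ≤ T → MemLp (f t) 2 μ) →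
      ∫ ω, (1 / (T : ℝ)) * ∑ t ∈ Icc 1 T,
          (f t ω - (1 / (T : ℝ)) * ∑ s ∈ Icc 1 T, f s ω)
            * (ε t ω - (1 / (T : ℝ)) * ∑ s ∈ Icc 1 T, ε s ω) ∂μ
        = (1 / (T : ℝ)) * (∑ t ∈ Icc 1 T, ∫ ω, f t ω * ε t ω ∂μ
            - (1 / (T : ℝ)) * ∑ s ∈ Icc 1 T, ∑ r ∈ Icc 1 T, ∫ ω, f s ω * ε r ω ∂μ) := by
    intro f hf
    have hmem : ∀ s, s ∈ Icc 1 T → 1 ≤ s ∧ s ≤ T := by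
      intro s hs; simpa [Finset.mem_Icc] using hs
    have hrw : ∀ ω, (1 / (T : ℝ)) * ∑ t ∈ Icc 1 T,
        (f t ω - (1 / (T : ℝ)) * ∑ s ∈ Icc 1 T, f s ω)
          * (ε t ω - (1 / (T : ℝ)) * ∑ s ∈ Icc 1 T, ε s ω)
        = (1 / (T : ℝ)) * (∑ t ∈ Icc 1 T, f t ω * ε t ω
            - (1 / (T : ℝ)) * ∑ s ∈ Icc 1 T, ∑ r ∈ Icc 1 T, f s ω * ε r ω) := by
      intro ω
      rw [tilde_sum_eq hT0 hcard (fun t => f t ω) (fun t => ε t ω)]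
    rw [integral_congr_ae (Filter.Eventually.of_forall hrw), integral_const_mul]
    have hidiag : ∀ t ∈ Icc 1 T, Integrable (fun ω => f t ω * ε t ω) μ := by
      intro t ht
      obtain ⟨h1, h2⟩ := hmem t ht
      exact my_integrable_mul (hf t h1 h2) (hεL2 t h1 h2)
    have hipair : ∀ s ∈ Icc 1 T, Integrable (fun ω => ∑ r ∈ Icc 1 T, f s ω * ε r ω) μ := by
      intro s hs
      obtain ⟨h1, h2⟩ := hmem s hs
      apply integrable_finset_sum
      intro r hr
      obtain ⟨h3, h4⟩ := hmem r hr
      exact my_integrable_mul (hf s h1 h2) (hεL2 r h3 h4)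
    rw [integral_sub (integrable_finset_sum _ hidiag)
      ((integrable_finset_sum _ hipair).const_mul _), integral_const_mul,
      integral_finset_sum _ hidiag, integral_finset_sum _ hipair]
    have h5 : ∀ s ∈ Icc 1 T, ∫ ω, ∑ r ∈ Icc 1 T, f s ω * ε r ω ∂μ
        = ∑ r ∈ Icc 1 T, ∫ ω, f s ω * ε r ω ∂μ := by
      intro s hs
      obtain ⟨h1, h2⟩ := hmem s hs
      refine integral_finset_sum _ fun r hr => ?_
      obtain ⟨h3, h4⟩ := hmem r hr
      exact my_integrable_mul (hf s h1 h2) (hεL2 r h3 h4)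
    rw [Finset.sum_congr rfl h5]
  -- the key double sum
  set K : ℝ := ∑ s ∈ Icc 1 T, ∑ r ∈ Icc 1 T, (if r ≤ s-1 then φ^(s-1-r) * σε2 else 0) with hKdef
  have hK : K = σε2 * ∑ l ∈ range (T - 1), ∑ j ∈ range (l + 1), φ ^ j := by
    have hinner : ∀ s ∈ Icc 1 T,
        ∑ r ∈ Icc 1 T, (if r ≤ s-1 then φ^(s-1-r) * σε2 else 0)
          = σε2 * ∑ j ∈ range (s-1), φ^j := by
      intro s hs
      simp only [Finset.mem_Icc] at hs
      rw [← Finset.sum_filter]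
      have hfil : (Icc 1 T).filter (fun r => r ≤ s-1) = Icc 1 (s-1) := by
        ext r; simp only [Finset.mem_filter, Finset.mem_Icc]; omega
      rw [hfil]
      exact icc_pow_sum φ σε2 (s-1)
    rw [hKdef, Finset.sum_congr rfl hinner,
      icc_shift_sum T (fun m => σε2 * ∑ j ∈ range m, φ^j),
      show T = (T-1) + 1 by omega, Finset.sum_range_succ']
    simp only [Finset.range_zero, Finset.sum_empty, mul_zero, add_zero]
    rw [Finset.mul_sum]
    norm_num
  -- evaluate the two integrals
  have hIntD : ∫ ω, (1 / (T : ℝ)) * ∑ t ∈ Icc 1 T,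
      (D t ω - (1 / (T : ℝ)) * ∑ s ∈ Icc 1 T, D s ω)
        * (ε t ω - (1 / (T : ℝ)) * ∑ s ∈ Icc 1 T, ε s ω) ∂μ
      = (1 / (T : ℝ)) * (0 - (1 / (T : ℝ)) * (ρ₂ * K)) := by
    rw [main D (fun t h1 h2 => hDL2 t h1 h2)]
    have hdiag : ∑ t ∈ Icc 1 T, ∫ ω, D t ω * ε t ω ∂μ = 0 := by
      refine Finset.sum_eq_zero fun t ht => ?_
      simp only [Finset.mem_Icc] at ht
      rw [hEDε t ht.1 ht.2 t ht.1 ht.2, if_neg (by omega), mul_zero]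
    have hdbl : ∑ s ∈ Icc 1 T, ∑ r ∈ Icc 1 T, ∫ ω, D s ω * ε r ω ∂μ = ρ₂ * K := by
      rw [hKdef, Finset.mul_sum]
      refine Finset.sum_congr rfl fun s hs => ?_
      simp only [Finset.mem_Icc] at hs
      rw [Finset.mul_sum]
      refine Finset.sum_congr rfl fun r hr => ?_
      simp only [Finset.mem_Icc] at hr
      exact hEDε s hs.1 hs.2 r hr.1 hr.2
    rw [hdiag, hdbl]
  have hIntY : ∫ ω, (1 / (T : ℝ)) * ∑ t ∈ Icc 1 T,
      (Y (t - 1) ω - (1 / (T : ℝ)) * ∑ s ∈ Icc 1 T, Y (s - 1) ω)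
        * (ε t ω - (1 / (T : ℝ)) * ∑ s ∈ Icc 1 T, ε s ω) ∂μ
      = (1 / (T : ℝ)) * (0 - (1 / (T : ℝ)) * K) := by
    rw [main (fun t => Y (t-1)) (fun t h1 _ => hYL2 (t-1) (by omega))]
    have hdiag : ∑ t ∈ Icc 1 T, ∫ ω, Y (t-1) ω * ε t ω ∂μ = 0 := by
      refine Finset.sum_eq_zero fun t ht => ?_
      simp only [Finset.mem_Icc] at ht
      rw [hEYε (t-1) (by omega) t ht.1 ht.2, if_neg (by omega)]
    have hdbl : ∑ s ∈ Icc 1 T, ∑ r ∈ Icc 1 T, ∫ ω, Y (s-1) ω * ε r ω ∂μ = K := by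
      rw [hKdef]
      refine Finset.sum_congr rfl fun s hs => ?_
      simp only [Finset.mem_Icc] at hs
      refine Finset.sum_congr rfl fun r hr => ?_
      simp only [Finset.mem_Icc] at hr
      exact hEYε (s-1) (by omega) r hr.1 hr.2
    rw [hdiag, hdbl]
  constructor
  · rw [hIntD, hK]; field_simp; ring
  · rw [hIntD, hIntY]; ring
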